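/- Selection rule for the lowest-weight state: for natural numbers a, b with b ≥ a (i.e. j₁ ≥ j) and every k ≤ a, one has f̃^{2k + b − a}(0, a − k) = some (k, b); hence the lowest-weight vector of the second factor paired with the component k of the first factor lies in the connected component with 2J = a + b − 2(a − k) = b − a + 2k. (In spin language: the crystal tensor operator component τ^j_m applied to the lowest-weight state |j₁, −j₁⟩ with j₁ ≥ j produces a state of the single irreducible representation J = j₁ − m, one for each m = −j, …, j.) -/
import Mathlib


/-- Kashiwara's lowering operator `f̃` on the crystal tensor product `B_a ⊗ B_b`,
modeled on pairs `(k, l)` of lowering-step counters (`k ≤ a`, `l ≤ b`):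
`f̃(k,l) = (k+1, l)` if `a - k > l`; `f̃(k,l) = (k, l+1)` if `a - k ≤ l` and `l < b`;
`f̃(k,l) = none` otherwise. -/
def ftil (a b : ℕ) (p : ℕ × ℕ) : Option (ℕ × ℕ) :=
  if p.2 < a - p.1 then some (p.1 + 1, p.2)
  else if p.2 < b then some (p.1, p.2 + 1)
  else none

/-- Kashiwara's raising operator `ẽ` on the crystal tensor product `B_a ⊗ B_b`:
`ẽ(k,l) = (k-1, l)` if `a - k ≥ l` and `k > 0`; `ẽ(k,l) = (k, l-1)` if `a - k < l`;
`ẽ(k,l) = none` otherwise. -/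
def etil (a b : ℕ) (p : ℕ × ℕ) : Option (ℕ × ℕ) :=
  if p.2 ≤ a - p.1 ∧ 0 < p.1 then some (p.1 - 1, p.2)
  else if a - p.1 < p.2 then some (p.1, p.2 - 1)
  else none

/-- `n`-fold application of a partially defined crystal operator, propagating `none`. -/
def iterOpt (f : ℕ × ℕ → Option (ℕ × ℕ)) (n : ℕ) (p : ℕ × ℕ) : Option (ℕ × ℕ) :=
  (fun o => o.bind f)^[n] (some p)

lemma iterOpt_succ (f : ℕ × ℕ → Option (ℕ × ℕ)) (n : ℕ) (p q : ℕ × ℕ)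
    (h : f p = some q) : iterOpt f (n+1) p = iterOpt f n q := by
  simp [iterOpt, Function.iterate_succ_apply, h]

lemma iterOpt_fill (a b k : ℕ) : ∀ j l, a - k ≤ l → l + j = b →
    iterOpt (ftil a b) j (k, l) = some (k, b) := by
  intro j
  induction j with
  | zero => intro l h1 h2; simp at h2; subst h2; simp [iterOpt]
  | succ j ih =>
    intro l h1 h2
    have hstep : ftil a b (k, l) = some (k, l + 1) := by
      simp only [ftil]
      rw [if_neg (by omega), if_pos (by omega)]
    rw [iterOpt_succ _ _ _ _ hstep]
    exact ih (l+1) (by omega) (by omega)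

lemma iterOpt_climb (a b k m : ℕ) (hk : k ≤ a) : ∀ i, i ≤ k →
    iterOpt (ftil a b) (i + m) (k - i, a - k) = iterOpt (ftil a b) m (k, a - k) := by
  intro i
  induction i with
  | zero => simp
  | succ i ih =>
    intro hi
    have hstep : ftil a b (k - (i+1), a - k) = some (k - i, a - k) := by
      simp only [ftil]
      rw [if_pos (by omega)]
      congr 1
      ext <;> simp <;> omega
    have : (i + 1) + m = (i + m) + 1 := by omega
    rw [this, iterOpt_succ _ _ _ _ hstep]
    exact ih (by omega)
/-- Selection rule for the lowest-weight state: for `b ≥ a` and every `k ≤ a`,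
`f̃^(2k + b - a)(0, a - k) = some (k, b)`; the lowest-weight vector of the second factor
paired with component `k` of the first lies in the component with `2J = b - a + 2k`. -/
theorem crystal_lowest_weight_selection_rule (a b : ℕ) (hab : a ≤ b) (k : ℕ) (hk : k ≤ a) :
    iterOpt (ftil a b) (2 * k + b - a) (0, a - k) = some (k, b) := by
  have h1 : 2 * k + b - a = k + (b - (a - k)) := by omega
  have h2 : (0 : ℕ) = k - k := by omega
  rw [h1, h2, iterOpt_climb a b k _ hk k le_rfl]
  exact iterOpt_fill a b k _ _ le_rfl (by omega)
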